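/- Let Y(ℝⁿ) be a translation-invariant Banach function space, Ω ⊆ ℝⁿ of positive measure, and let w, w* be weights with w ∈ Y_loc, 1/w ∈ Y'_loc, w* ∈ L¹_loc. Suppose w*(y) w(x − y) w(x)^{-1} ≥ 1 for all x ∈ ℝⁿ and all y ∈ Ω. Then for every κ ∈ L¹(ℝⁿ, w*) supported in Ω and every f ∈ Y(ℝⁿ, w): ‖κ ∗ f‖_{Y(ℝⁿ,w)} ≤ ‖κ‖_{L¹(ℝⁿ,w*)} ‖f‖_{Y(ℝⁿ,w)}. -/

import Mathlib

open MeasureTheory Filter ENNReal Metric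

noncomputable section

/-- A Banach function norm on measurable functions over a measure space `α`,
following Bennett–Sharpley: axioms (A1)–(A5). -/
structure BanachFunctionNorm (α : Type) [MeasureSpace α] where
  ρ : (α → ℝ≥0∞) → ℝ≥0∞
  ρ_zero : ∀ f, ρ f = 0 ↔ f =ᵐ[volume] 0
  ρ_smul : ∀ (a : NNReal) (f : α → ℝ≥0∞), ρ (fun x => (a : ℝ≥0∞) * f x) = a * ρ f
  ρ_add : ∀ f g, ρ (fun x => f x + g x) ≤ ρ f + ρ g
  ρ_mono : ∀ f g, (∀ᵐ x ∂volume, f x ≤ g x) → ρ f ≤ ρ g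
  ρ_fatou : ∀ (f : ℕ → α → ℝ≥0∞),
      (∀ j, ∀ᵐ x ∂volume, f j x ≤ f (j+1) x) →
      ρ (fun x => ⨆ j, f j x) = ⨆ j, ρ (f j)
  ρ_finite : ∀ E : Set α, MeasurableSet E → volume E < ⊤ → ρ (E.indicator 1) < ⊤
  ρ_loc_embed : ∀ E : Set α, MeasurableSet E → volume E < ⊤ →
      ∃ C : ℝ≥0∞, C < ⊤ ∧ ∀ f : α → ℝ≥0∞, ∫⁻ x in E, f x ∂volume ≤ C * ρ f

/-- The associate (Köthe dual) norm of a Banach function norm. -/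
def BanachFunctionNorm.associate {α : Type} [MeasureSpace α]
    (X : BanachFunctionNorm α) (g : α → ℝ≥0∞) : ℝ≥0∞ :=
  ⨆ f ∈ {f : α → ℝ≥0∞ | X.ρ f ≤ 1}, ∫⁻ x, f x * g x ∂volume

namespace BanachFunctionNorm

variable {α : Type} [MeasureSpace α] (X : BanachFunctionNorm α)

lemma ρ_congr {f g : α → ℝ≥0∞} (h : f =ᵐ[volume] g) : X.ρ f = X.ρ g :=
  le_antisymm (X.ρ_mono f g (h.mono fun _ hx => hx.le))
    (X.ρ_mono g f (h.mono fun _ hx => hx.ge))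

lemma ρ_mul (c : ℝ≥0∞) (hc : c ≠ ⊤) (f : α → ℝ≥0∞) :
    X.ρ (fun x => c * f x) = c * X.ρ f := by
  have h := X.ρ_smul c.toNNReal f
  rwa [ENNReal.coe_toNNReal hc] at h

/-- Hölder inequality for the associate norm. -/
lemma pair_le {f φ : α → ℝ≥0∞} (hf : X.ρ f ≠ ⊤) (hφ : X.associate φ ≤ 1) :
    ∫⁻ x, f x * φ x ∂volume ≤ X.ρ f := by
  rcases eq_or_ne (X.ρ f) 0 with h0 | h0
  · have hf0 : f =ᵐ[volume] 0 := (X.ρ_zero f).1 h0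
    have hz : (fun x => f x * φ x) =ᵐ[volume] 0 := hf0.mono fun x hx => by
      simp only [Pi.zero_apply] at hx ⊢; simp [hx]
    rw [lintegral_congr_ae hz]
    simp [h0]
  · set t := X.ρ f with ht
    have h1 : X.ρ (fun x => t⁻¹ * f x) ≤ 1 := by
      rw [X.ρ_mul t⁻¹ (by simp [h0]) f, ENNReal.inv_mul_cancel h0 hf]
    have h2 : ∫⁻ x, (t⁻¹ * f x) * φ x ∂volume ≤ X.associate φ := by
      refine le_trans ?_ (le_iSup₂ (f := fun g (_ : g ∈ {f | X.ρ f ≤ 1}) =>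
        ∫⁻ x, g x * φ x ∂volume) (fun x => t⁻¹ * f x) h1)
      exact le_rfl
    have h3 : t⁻¹ * ∫⁻ x, f x * φ x ∂volume ≤ 1 := by
      calc t⁻¹ * ∫⁻ x, f x * φ x ∂volume
          = ∫⁻ x, t⁻¹ * (f x * φ x) ∂volume :=
            (lintegral_const_mul' _ _ (by simp [h0])).symm
        _ = ∫⁻ x, (t⁻¹ * f x) * φ x ∂volume := by simp [mul_assoc]
        _ ≤ X.associate φ := h2
        _ ≤ 1 := hφ
    calc ∫⁻ x, f x * φ x ∂volume
        = t * (t⁻¹ * ∫⁻ x, f x * φ x ∂volume) := by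
          rw [← mul_assoc, ENNReal.mul_inv_cancel h0 hf, one_mul]
      _ ≤ t * 1 := mul_le_mul_right h3 t
      _ = t := mul_one t

/-- Fatou-type: ρ of an a.e. pointwise limit is bounded by a uniform bound. -/
lemma ρ_le_of_tendsto {F : ℕ → α → ℝ≥0∞} {g : α → ℝ≥0∞} {r : ℝ≥0∞}
    (hF : ∀ j, X.ρ (F j) ≤ r)
    (hconv : ∀ᵐ x ∂volume, Tendsto (fun j => F j x) atTop (nhds (g x))) :
    X.ρ g ≤ r := by
  set A : ℕ → α → ℝ≥0∞ := fun m x => ⨅ j, ⨅ (_ : j ≥ m), F j x with hA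
  have hmono : ∀ m, ∀ᵐ x ∂volume, A m x ≤ A (m + 1) x := by
    intro m
    refine ae_of_all _ fun x => ?_
    exact le_iInf₂ fun j hj => iInf₂_le j (le_trans (Nat.le_succ m) hj)
  have hsup : ∀ᵐ x ∂volume, g x = ⨆ m, A m x := by
    refine hconv.mono fun x hx => ?_
    have h1 : liminf (fun j => F j x) atTop = g x := hx.liminf_eq
    rw [← h1, liminf_eq_iSup_iInf_of_nat]
  calc X.ρ g = X.ρ (fun x => ⨆ m, A m x) := X.ρ_congr hsup
    _ = ⨆ m, X.ρ (A m) := X.ρ_fatou A hmono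
    _ ≤ r := iSup_le fun m =>
        le_trans (X.ρ_mono _ (F m) (ae_of_all _ fun x => iInf₂_le m le_rfl)) (hF m)

end BanachFunctionNorm

lemma iSup_min_natCast (a : ℝ≥0∞) : ⨆ m : ℕ, min a (m : ℝ≥0∞) = a := by
  rcases eq_or_ne a ⊤ with rfl | ha
  · simp only [min_top_left, top_le_iff]
    rw [iSup_eq_top]
    intro b hb
    obtain ⟨m, hm⟩ := ENNReal.exists_nat_gt hb.ne
    exact ⟨m, by simpa using hm⟩
  · obtain ⟨m, hm⟩ := ENNReal.exists_nat_gt ha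
    refine le_antisymm (iSup_le fun m => min_le_left _ _) ?_
    exact le_trans (le_of_eq (min_eq_left hm.le).symm)
      (le_iSup (fun m : ℕ => min a (m : ℝ≥0∞)) m)

set_option maxHeartbeats 1000000 in
set_option synthInstance.maxHeartbeats 400000 in
lemma ρ_le_of_pairing {n : ℕ} (Y : BanachFunctionNorm (EuclideanSpace ℝ (Fin n)))
    (h : EuclideanSpace ℝ (Fin n) → ℝ≥0∞) (hm : Measurable h) (r : ℝ≥0∞)
    (hb : ∀ φ : EuclideanSpace ℝ (Fin n) → ℝ≥0∞, Measurable φ → (∀ x, φ x < ⊤) →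
      Y.associate φ ≤ 1 → ∫⁻ x, h x * φ x ≤ r) :
    Y.ρ h ≤ r := by
  by_contra hcon
  push_neg at hcon
  -- truncation sequence
  set Hs : ℕ → EuclideanSpace ℝ (Fin n) → ℝ≥0∞ :=
    fun m => (ball (0 : EuclideanSpace ℝ (Fin n)) m).indicator
      (fun x => min (h x) (m : ℝ≥0∞)) with hHs
  have hmono : ∀ m, ∀ x, Hs m x ≤ Hs (m + 1) x := by
    intro m x
    by_cases hx : x ∈ ball (0 : EuclideanSpace ℝ (Fin n)) (m : ℝ)
    · have hx' : x ∈ ball (0 : EuclideanSpace ℝ (Fin n)) ((m + 1 : ℕ) : ℝ) :=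
        ball_subset_ball (by exact_mod_cast Nat.le_succ m) hx
      simp only [hHs]
      rw [Set.indicator_of_mem hx, Set.indicator_of_mem hx']
      exact min_le_min le_rfl (by exact_mod_cast Nat.le_succ m)
    · simp only [hHs]; rw [Set.indicator_of_notMem hx]; exact zero_le
  have hsup : ∀ x, (⨆ m, Hs m x) = h x := by
    intro x
    obtain ⟨k, hk⟩ := exists_nat_gt ‖x‖
    refine le_antisymm (iSup_le fun m => ?_) ?_
    · by_cases hx : x ∈ ball (0 : EuclideanSpace ℝ (Fin n)) (m : ℝ)
      · simp only [hHs]; rw [Set.indicator_of_mem hx]; exact min_le_left _ _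
      · simp only [hHs]; rw [Set.indicator_of_notMem hx]; exact zero_le
    · conv_lhs => rw [← iSup_min_natCast (h x)]
      refine iSup_le fun m => ?_
      have hxm : x ∈ ball (0 : EuclideanSpace ℝ (Fin n)) ((max m k : ℕ) : ℝ) := by
        simp only [mem_ball, dist_zero_right]
        calc ‖x‖ < k := hk
          _ ≤ ((max m k : ℕ) : ℝ) := by exact_mod_cast le_max_right m k
      refine le_trans ?_ (le_iSup (fun m => Hs m x) (max m k))
      simp only [hHs]; rw [Set.indicator_of_mem hxm]
      exact min_le_min le_rfl (by exact_mod_cast le_max_left m k)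
  have hρh : Y.ρ h = ⨆ m, Y.ρ (Hs m) := by
    rw [← Y.ρ_fatou Hs (fun m => ae_of_all _ (hmono m))]
    exact Y.ρ_congr (ae_of_all _ fun x => (hsup x).symm)
  rw [hρh] at hcon
  obtain ⟨N, hN⟩ := lt_iSup_iff.mp hcon
  set E := ball (0 : EuclideanSpace ℝ (Fin n)) (N : ℝ) with hE
  have hEm : MeasurableSet E := measurableSet_ball
  have hEfin : volume E < ⊤ := measure_ball_lt_top
  set HN := Hs N with hHN
  have hHNle : ∀ x, HN x ≤ h x := by
    intro x
    by_cases hx : x ∈ E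
    · simp only [hHN, hHs]; rw [Set.indicator_of_mem hx]; exact min_le_left _ _
    · simp only [hHN, hHs]; rw [Set.indicator_of_notMem hx]; exact zero_le
  have hHNbd : ∀ x, HN x ≤ (N : ℝ≥0∞) := by
    intro x
    by_cases hx : x ∈ E
    · simp only [hHN, hHs]; rw [Set.indicator_of_mem hx]; exact min_le_right _ _
    · simp only [hHN, hHs]; rw [Set.indicator_of_notMem hx]; exact zero_le
  have hHNne : ∀ x, HN x ≠ ⊤ := fun x =>
    (lt_of_le_of_lt (hHNbd x) (by simp)).ne
  have hHNm : Measurable HN := (hm.min measurable_const).indicator hEm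
  have hρHN_top : Y.ρ HN < ⊤ := by
    have hle : ∀ x, HN x ≤ (N : ℝ≥0∞) * E.indicator 1 x := by
      intro x
      by_cases hx : x ∈ E
      · rw [Set.indicator_of_mem hx]
        simp only [hHN, hHs]
        rw [Set.indicator_of_mem hx]
        simpa using min_le_right (h x) (N : ℝ≥0∞)
      · rw [Set.indicator_of_notMem hx]
        simp only [hHN, hHs]
        rw [Set.indicator_of_notMem hx]
        exact zero_le
    calc Y.ρ HN ≤ Y.ρ (fun x => (N : ℝ≥0∞) * E.indicator 1 x) :=
          Y.ρ_mono _ _ (ae_of_all _ hle)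
      _ = (N : ℝ≥0∞) * Y.ρ (E.indicator 1) := Y.ρ_mul _ (by simp) _
      _ < ⊤ := ENNReal.mul_lt_top (by simp) (Y.ρ_finite E hEm hEfin)
  obtain ⟨r', hr1, hr2⟩ := exists_between hN
  have hr'0 : r' ≠ 0 := (lt_of_le_of_lt zero_le hr1).ne'
  have hr't : r' ≠ ⊤ := (hr2.trans hρHN_top).ne
  set μ := (volume : Measure (EuclideanSpace ℝ (Fin n))).restrict E with hμ
  haveI : IsFiniteMeasure μ := ⟨by rw [hμ, Measure.restrict_apply_univ]; exact hEfin⟩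
  -- transfer of a.e. equalities
  have indic_ae : ∀ {u v : EuclideanSpace ℝ (Fin n) → ℝ}, u =ᵐ[μ] v →
      (E.indicator fun x => ENNReal.ofReal (u x)) =ᵐ[volume]
      (E.indicator fun x => ENNReal.ofReal (v x)) := by
    intro u v huv
    have h1 : ∀ᵐ x ∂(volume : Measure (EuclideanSpace ℝ (Fin n))), x ∈ E → u x = v x :=
      (ae_restrict_iff' hEm).1 huv
    refine h1.mono fun x hx => ?_
    by_cases hxE : x ∈ E
    · rw [Set.indicator_of_mem hxE, Set.indicator_of_mem hxE, hx hxE]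
    · rw [Set.indicator_of_notMem hxE, Set.indicator_of_notMem hxE]
  set Φ : Lp ℝ 2 μ → EuclideanSpace ℝ (Fin n) → ℝ≥0∞ :=
    fun u => E.indicator (fun x => ENNReal.ofReal (u x)) with hΦ
  set S : Set (Lp ℝ 2 μ) := {u | Y.ρ (Φ u) ≤ r'} with hS
  have hSconv : Convex ℝ S := by
    intro u hu v hv a b ha hb hab
    have hcoe : (↑↑(a • u + b • v) : EuclideanSpace ℝ (Fin n) → ℝ)
        =ᵐ[μ] fun x => a * (u : EuclideanSpace ℝ (Fin n) → ℝ) x + b * v x := by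
      filter_upwards [Lp.coeFn_add (a • u) (b • v), Lp.coeFn_smul a u, Lp.coeFn_smul b v]
        with x h1 h2 h3
      simp only [h1, Pi.add_apply, h2, h3, Pi.smul_apply, smul_eq_mul]
    have h1 : Y.ρ (Φ (a • u + b • v)) =
        Y.ρ (E.indicator fun x => ENNReal.ofReal (a * (u : EuclideanSpace ℝ (Fin n) → ℝ) x + b * v x)) :=
      Y.ρ_congr (indic_ae hcoe)
    have h2 : ∀ x, (E.indicator fun x => ENNReal.ofReal
          (a * (u : EuclideanSpace ℝ (Fin n) → ℝ) x + b * v x)) x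
        ≤ ENNReal.ofReal a * Φ u x + ENNReal.ofReal b * Φ v x := by
      intro x
      by_cases hxE : x ∈ E
      · rw [Set.indicator_of_mem hxE, hΦ]
        simp only [Set.indicator_of_mem hxE]
        calc ENNReal.ofReal (a * (u : EuclideanSpace ℝ (Fin n) → ℝ) x + b * v x)
            ≤ ENNReal.ofReal (a * (u : EuclideanSpace ℝ (Fin n) → ℝ) x)
              + ENNReal.ofReal (b * v x) := ENNReal.ofReal_add_le
          _ = ENNReal.ofReal a * ENNReal.ofReal ((u : EuclideanSpace ℝ (Fin n) → ℝ) x)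
              + ENNReal.ofReal b * ENNReal.ofReal (v x) := by
              rw [ENNReal.ofReal_mul ha, ENNReal.ofReal_mul hb]
      · simp [Set.indicator_of_notMem hxE]
    calc Y.ρ (Φ (a • u + b • v))
        ≤ Y.ρ (fun x => ENNReal.ofReal a * Φ u x + ENNReal.ofReal b * Φ v x) := by
          rw [h1]; exact Y.ρ_mono _ _ (ae_of_all _ h2)
      _ ≤ Y.ρ (fun x => ENNReal.ofReal a * Φ u x) + Y.ρ (fun x => ENNReal.ofReal b * Φ v x) :=
          Y.ρ_add _ _
      _ = ENNReal.ofReal a * Y.ρ (Φ u) + ENNReal.ofReal b * Y.ρ (Φ v) := by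
          rw [Y.ρ_mul _ ENNReal.ofReal_ne_top, Y.ρ_mul _ ENNReal.ofReal_ne_top]
      _ ≤ ENNReal.ofReal a * r' + ENNReal.ofReal b * r' :=
          add_le_add (mul_le_mul_right hu _) (mul_le_mul_right hv _)
      _ = ENNReal.ofReal (a + b) * r' := by rw [ENNReal.ofReal_add ha hb, add_mul]
      _ = r' := by rw [hab]; simp
  have hSclosed : IsClosed S := by
    refine IsSeqClosed.isClosed ?_
    intro us u hus hlim
    have htm : TendstoInMeasure μ (fun k => ((us k : Lp ℝ 2 μ) : EuclideanSpace ℝ (Fin n) → ℝ))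
        atTop u := tendstoInMeasure_of_tendsto_Lp hlim
    obtain ⟨ns, _, hae⟩ := htm.exists_seq_tendsto_ae
    have hconv : ∀ᵐ x ∂(volume : Measure (EuclideanSpace ℝ (Fin n))),
        Tendsto (fun i => Φ (us (ns i)) x) atTop (nhds (Φ u x)) := by
      have h1 : ∀ᵐ x ∂(volume : Measure (EuclideanSpace ℝ (Fin n))), x ∈ E →
          Tendsto (fun i => ((us (ns i) : Lp ℝ 2 μ) : EuclideanSpace ℝ (Fin n) → ℝ) x) atTop
            (nhds ((u : EuclideanSpace ℝ (Fin n) → ℝ) x)) := (ae_restrict_iff' hEm).1 hae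
      refine h1.mono fun x hx => ?_
      by_cases hxE : x ∈ E
      · simp only [hΦ, Set.indicator_of_mem hxE]
        exact (ENNReal.continuous_ofReal.tendsto _).comp (hx hxE)
      · simp only [hΦ, Set.indicator_of_notMem hxE]
        exact tendsto_const_nhds
    exact Y.ρ_le_of_tendsto (fun i => hus (ns i)) hconv
  -- the point to separate
  set hnf : EuclideanSpace ℝ (Fin n) → ℝ := fun x => (HN x).toReal with hhnf
  have hnm : Measurable hnf := hHNm.ennreal_toReal
  have hn_nonneg : ∀ x, 0 ≤ hnf x := fun x => ENNReal.toReal_nonneg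
  have hn_bdd : ∀ x, |hnf x| ≤ (N : ℝ) := by
    intro x
    rw [abs_of_nonneg (hn_nonneg x)]
    simpa using ENNReal.toReal_mono (by simp) (hHNbd x)
  have hmemfH : MemLp hnf 2 μ :=
    MemLp.of_bound hnm.aestronglyMeasurable (N : ℝ)
      (ae_of_all _ fun x => by simpa [Real.norm_eq_abs] using hn_bdd x)
  set fH : Lp ℝ 2 μ := MemLp.toLp hnf hmemfH with hfH
  have hΦfH : Φ fH =ᵐ[volume] HN := by
    refine (indic_ae hmemfH.coeFn_toLp).trans (ae_of_all _ fun x => ?_)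
    by_cases hxE : x ∈ E
    · rw [Set.indicator_of_mem hxE, hhnf, ENNReal.ofReal_toReal (hHNne x)]
    · rw [Set.indicator_of_notMem hxE]
      simp only [hHN, hHs]
      rw [Set.indicator_of_notMem hxE]
  have hfHS : fH ∉ S := by
    intro hmem
    have : Y.ρ HN ≤ r' := by rw [← Y.ρ_congr hΦfH]; exact hmem
    exact absurd this (not_le.mpr hr2)
  obtain ⟨Λ, u0, hSlt, hu0lt⟩ := geometric_hahn_banach_closed_point hSconv hSclosed hfHS
  have hu0pos : 0 < u0 := by
    have h0S : (0 : Lp ℝ 2 μ) ∈ S := by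
      have h0 : Φ (0 : Lp ℝ 2 μ) =ᵐ[volume] 0 := by
        refine (indic_ae (Lp.coeFn_zero ℝ 2 μ)).trans (ae_of_all _ fun x => ?_)
        by_cases hxE : x ∈ E <;>
          simp [Set.indicator_of_mem, Set.indicator_of_notMem, hxE]
      show Y.ρ (Φ 0) ≤ r'
      rw [Y.ρ_congr h0, (Y.ρ_zero 0).2 (ae_of_all _ fun _ => rfl)]
      exact zero_le
    simpa using hSlt 0 h0S
  set φ₀ : Lp ℝ 2 μ := (InnerProductSpace.toDual ℝ (Lp ℝ 2 μ)).symm Λ with hφ₀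
  have hrep : ∀ v : Lp ℝ 2 μ, (inner ℝ φ₀ v : ℝ) = Λ v := fun v =>
    InnerProductSpace.toDual_symm_apply
  have hinner : ∀ v : Lp ℝ 2 μ, (inner ℝ φ₀ v : ℝ) =
      ∫ x, (φ₀ : EuclideanSpace ℝ (Fin n) → ℝ) x * (v : EuclideanSpace ℝ (Fin n) → ℝ) x ∂μ := by
    intro v
    rw [L2.inner_def]
    simp only [RCLike.inner_apply, conj_trivial]
    exact integral_congr_ae (ae_of_all _ fun _ => mul_comm _ _)
  have hφ₀m := Lp.aestronglyMeasurable φ₀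
  set ψ : EuclideanSpace ℝ (Fin n) → ℝ := hφ₀m.mk _ with hψdef
  have hψm : StronglyMeasurable ψ := hφ₀m.stronglyMeasurable_mk
  have hψae : (φ₀ : EuclideanSpace ℝ (Fin n) → ℝ) =ᵐ[μ] ψ := hφ₀m.ae_eq_mk
  set φ : EuclideanSpace ℝ (Fin n) → ℝ≥0∞ :=
    E.indicator (fun x => ENNReal.ofReal (ψ x)) with hφdef
  have hφm : Measurable φ := (ENNReal.measurable_ofReal.comp hψm.measurable).indicator hEm
  have hφfin : ∀ x, φ x < ⊤ := by
    intro x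
    by_cases hxE : x ∈ E
    · rw [hφdef, Set.indicator_of_mem hxE]; exact ENNReal.ofReal_lt_top
    · rw [hφdef, Set.indicator_of_notMem hxE]; simp
  have hψint : Integrable ψ μ := ((Lp.memLp φ₀).ae_eq hψae).integrable one_le_two
  have hψmaxint : Integrable (fun x => max (ψ x) 0) μ := hψint.pos_part
  -- computation lemma
  have hcomp : ∀ v : EuclideanSpace ℝ (Fin n) → ℝ, Measurable v → (∀ x, 0 ≤ v x) →
      (∃ C, ∀ x, |v x| ≤ C) →
      ∫⁻ x, ENNReal.ofReal (v x) * φ x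
        = ENNReal.ofReal (∫ x, v x * max (ψ x) 0 ∂μ) := by
    rintro v hvm hv0 ⟨C, hvC⟩
    have hint : Integrable (fun x => v x * max (ψ x) 0) μ :=
      hψmaxint.bdd_mul hvm.aestronglyMeasurable
        (ae_of_all _ fun x => by simpa [Real.norm_eq_abs] using hvC x)
    rw [ofReal_integral_eq_lintegral_ofReal hint
      (ae_of_all _ fun x => mul_nonneg (hv0 x) (le_max_right _ _))]
    rw [hμ, ← lintegral_indicator hEm]
    refine lintegral_congr fun x => ?_
    by_cases hxE : x ∈ E
    · rw [Set.indicator_of_mem hxE, hφdef, Set.indicator_of_mem hxE,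
        ENNReal.ofReal_mul (hv0 x)]
      congr 1
      rcases le_total 0 (ψ x) with hs | hs
      · rw [max_eq_left hs]
      · rw [max_eq_right hs, ENNReal.ofReal_zero, ENNReal.ofReal_of_nonpos hs]
    · rw [Set.indicator_of_notMem hxE, hφdef, Set.indicator_of_notMem hxE, mul_zero]
  -- upper pairing bound coming from the separation
  have hpair : ∀ v : EuclideanSpace ℝ (Fin n) → ℝ, Measurable v → (∀ x, 0 ≤ v x) →
      (∃ C, ∀ x, |v x| ≤ C) →
      Y.ρ (E.indicator fun x => ENNReal.ofReal (v x)) ≤ r' →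
      ∫⁻ x, ENNReal.ofReal (v x) * φ x ≤ ENNReal.ofReal u0 := by
    rintro v hvm hv0 ⟨C, hC⟩ hρv
    set v' : EuclideanSpace ℝ (Fin n) → ℝ := fun x => if 0 ≤ ψ x then v x else 0 with hv'
    have hv'm : Measurable v' :=
      Measurable.ite (measurableSet_le measurable_const hψm.measurable) hvm measurable_const
    have hv'0 : ∀ x, 0 ≤ v' x := by
      intro x; rw [hv']; dsimp only; split
      · exact hv0 x
      · exact le_rfl
    have hv'le : ∀ x, v' x ≤ v x := by
      intro x; rw [hv']; dsimp only; split
      · exact le_rfl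
      · exact hv0 x
    have hCnn : 0 ≤ C := le_trans (abs_nonneg _) (hC 0)
    have hv'C : ∀ x, |v' x| ≤ C := by
      intro x; rw [hv']; dsimp only; split
      · exact hC x
      · simpa using hCnn
    have hmem' : MemLp v' 2 μ :=
      MemLp.of_bound hv'm.aestronglyMeasurable C
        (ae_of_all _ fun x => by rw [Real.norm_eq_abs]; exact hv'C x)
    set a' : Lp ℝ 2 μ := MemLp.toLp v' hmem' with ha'
    have ha'S : a' ∈ S := by
      show Y.ρ (Φ a') ≤ r'
      rw [Y.ρ_congr (indic_ae hmem'.coeFn_toLp)]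
      refine le_trans (Y.ρ_mono _ _ (ae_of_all _ fun x => ?_)) hρv
      by_cases hxE : x ∈ E
      · rw [Set.indicator_of_mem hxE, Set.indicator_of_mem hxE]
        exact ENNReal.ofReal_le_ofReal (hv'le x)
      · rw [Set.indicator_of_notMem hxE, Set.indicator_of_notMem hxE]
    have hlt : ∫ x, v' x * (φ₀ : EuclideanSpace ℝ (Fin n) → ℝ) x ∂μ < u0 := by
      have h2 := hSlt a' ha'S
      rw [← hrep a', hinner a'] at h2
      refine lt_of_le_of_lt (le_of_eq ?_) h2
      refine integral_congr_ae ?_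
      filter_upwards [hmem'.coeFn_toLp] with x hx
      rw [hx, mul_comm]
    have heq : ∫ x, v x * max (ψ x) 0 ∂μ
        = ∫ x, v' x * (φ₀ : EuclideanSpace ℝ (Fin n) → ℝ) x ∂μ := by
      have e1 : ∫ x, v x * max (ψ x) 0 ∂μ = ∫ x, v' x * ψ x ∂μ := by
        refine integral_congr_ae (ae_of_all _ fun x => ?_)
        show v x * max (ψ x) 0 = v' x * ψ x
        rcases le_or_gt 0 (ψ x) with hs | hs
        · rw [max_eq_left hs, hv']; simp [hs]
        · rw [max_eq_right hs.le, hv']; simp [not_le.2 hs]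
      have e2 : ∫ x, v' x * ψ x ∂μ
          = ∫ x, v' x * (φ₀ : EuclideanSpace ℝ (Fin n) → ℝ) x ∂μ := by
        refine integral_congr_ae ?_
        filter_upwards [hψae] with x hx
        rw [hx]
      rw [e1, e2]
    calc ∫⁻ x, ENNReal.ofReal (v x) * φ x
        = ENNReal.ofReal (∫ x, v x * max (ψ x) 0 ∂μ) := hcomp v hvm hv0 ⟨C, hC⟩
      _ = ENNReal.ofReal (∫ x, v' x * (φ₀ : EuclideanSpace ℝ (Fin n) → ℝ) x ∂μ) := by rw [heq]
      _ ≤ ENNReal.ofReal u0 := ENNReal.ofReal_le_ofReal hlt.le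
  -- lower bound
  have hlow : ENNReal.ofReal u0 < ∫⁻ x, HN x * φ x := by
    have h1 : u0 < ∫ x, hnf x * max (ψ x) 0 ∂μ := by
      have h2 := hu0lt
      rw [← hrep fH, hinner fH] at h2
      have h3 : ∫ x, (φ₀ : EuclideanSpace ℝ (Fin n) → ℝ) x * (fH : EuclideanSpace ℝ (Fin n) → ℝ) x ∂μ
          = ∫ x, hnf x * ψ x ∂μ := by
        refine integral_congr_ae ?_
        filter_upwards [hψae, hmemfH.coeFn_toLp] with x hx1 hx2
        rw [hx1, hx2, mul_comm]
      rw [h3] at h2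
      refine lt_of_lt_of_le h2 (integral_mono ?_ ?_ fun x => ?_)
      · exact hψint.bdd_mul hnm.aestronglyMeasurable
          (ae_of_all _ fun x => by rw [Real.norm_eq_abs]; exact hn_bdd x)
      · exact hψmaxint.bdd_mul hnm.aestronglyMeasurable
          (ae_of_all _ fun x => by rw [Real.norm_eq_abs]; exact hn_bdd x)
      · exact mul_le_mul_of_nonneg_left (le_max_left _ _) (hn_nonneg x)
    calc ENNReal.ofReal u0 < ENNReal.ofReal (∫ x, hnf x * max (ψ x) 0 ∂μ) := by
          rw [ENNReal.ofReal_lt_ofReal_iff_of_nonneg hu0pos.le]; exact h1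
      _ = ∫⁻ x, ENNReal.ofReal (hnf x) * φ x := (hcomp hnf hnm hn_nonneg ⟨(N : ℝ), hn_bdd⟩).symm
      _ = ∫⁻ x, HN x * φ x := lintegral_congr fun x => by
          rw [hhnf, ENNReal.ofReal_toReal (hHNne x)]
  -- associate bound for φ
  have hassoc : Y.associate φ ≤ ENNReal.ofReal u0 / r' := by
    refine iSup₂_le fun f0 hf0 => ?_
    obtain ⟨F, hFm, hFle, hFeq⟩ :=
      exists_measurable_le_lintegral_eq volume (fun x => f0 x * φ x)
    set g : EuclideanSpace ℝ (Fin n) → ℝ≥0∞ :=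
      fun x => if φ x = 0 then 0 else F x * (φ x)⁻¹ with hgdef
    have hgm : Measurable g :=
      Measurable.ite (hφm (measurableSet_singleton 0)) measurable_const (hFm.mul hφm.inv)
    have hgle : ∀ x, g x ≤ f0 x := by
      intro x; rw [hgdef]; dsimp only; split
      · exact zero_le
      · rename_i hφx
        calc F x * (φ x)⁻¹ ≤ (f0 x * φ x) * (φ x)⁻¹ := mul_le_mul_left (hFle x) _
          _ = f0 x * (φ x * (φ x)⁻¹) := mul_assoc _ _ _
          _ = f0 x := by rw [ENNReal.mul_inv_cancel hφx (hφfin x).ne, mul_one]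
    have hgφ : ∀ x, g x * φ x = F x := by
      intro x; rw [hgdef]; dsimp only; split
      · rename_i hφx
        have hF0 : F x ≤ 0 := by simpa [hφx] using hFle x
        simp [hφx, le_zero_iff.1 hF0]
      · rename_i hφx
        rw [mul_assoc, ENNReal.inv_mul_cancel hφx (hφfin x).ne, mul_one]
    have hρg : Y.ρ g ≤ 1 := le_trans (Y.ρ_mono _ _ (ae_of_all _ hgle)) hf0
    have hkey : ∀ m : ℕ,
        r' * ∫⁻ x, E.indicator (fun y => min (g y) (m : ℝ≥0∞)) x * φ x ≤ ENNReal.ofReal u0 := by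
      intro m
      set gm := E.indicator (fun y => min (g y) (m : ℝ≥0∞)) with hgmdef
      have hgmm : Measurable gm := (hgm.min measurable_const).indicator hEm
      have hgmbd : ∀ x, gm x ≤ (m : ℝ≥0∞) := by
        intro x
        by_cases hxE : x ∈ E
        · rw [hgmdef, Set.indicator_of_mem hxE]; exact min_le_right _ _
        · rw [hgmdef, Set.indicator_of_notMem hxE]; exact zero_le
      have hgmfin : ∀ x, r' * gm x ≠ ⊤ := fun x =>
        ENNReal.mul_ne_top hr't (lt_of_le_of_lt (hgmbd x) (by simp)).ne
      set vm : EuclideanSpace ℝ (Fin n) → ℝ := fun x => (r' * gm x).toReal with hvmdef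
      have hvmm : Measurable vm := (measurable_const.mul hgmm).ennreal_toReal
      have hofReal : ∀ x, ENNReal.ofReal (vm x) = r' * gm x := fun x => by
        rw [hvmdef]; exact ENNReal.ofReal_toReal (hgmfin x)
      have hvm0 : ∀ x, 0 ≤ vm x := fun x => ENNReal.toReal_nonneg
      have hvmC : ∀ x, |vm x| ≤ (r' * m).toReal := by
        intro x
        rw [abs_of_nonneg (hvm0 x)]
        exact ENNReal.toReal_mono (ENNReal.mul_ne_top hr't (by simp))
          (mul_le_mul_right (hgmbd x) _)
      have hgmle : ∀ x, gm x ≤ g x := by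
        intro x
        by_cases hxE : x ∈ E
        · rw [hgmdef, Set.indicator_of_mem hxE]; exact min_le_left _ _
        · rw [hgmdef, Set.indicator_of_notMem hxE]; exact zero_le
      have hρvm : Y.ρ (E.indicator fun x => ENNReal.ofReal (vm x)) ≤ r' := by
        have heq2 : (E.indicator fun x => ENNReal.ofReal (vm x)) = fun x => r' * gm x := by
          funext x
          by_cases hxE : x ∈ E
          · rw [Set.indicator_of_mem hxE, hofReal]
          · rw [Set.indicator_of_notMem hxE, hgmdef, Set.indicator_of_notMem hxE, mul_zero]
        rw [heq2, Y.ρ_mul r' hr't]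
        calc r' * Y.ρ gm ≤ r' * Y.ρ g :=
              mul_le_mul_right (Y.ρ_mono _ _ (ae_of_all _ hgmle)) r'
          _ ≤ r' * 1 := mul_le_mul_right hρg r'
          _ = r' := mul_one r'
      have hres := hpair vm hvmm hvm0 ⟨(r' * m).toReal, hvmC⟩ hρvm
      calc r' * ∫⁻ x, gm x * φ x = ∫⁻ x, r' * (gm x * φ x) :=
            (lintegral_const_mul' r' _ hr't).symm
        _ = ∫⁻ x, ENNReal.ofReal (vm x) * φ x := lintegral_congr fun x => by
            rw [hofReal, mul_assoc]
        _ ≤ ENNReal.ofReal u0 := hres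
    -- monotone limit in m
    have hsupg : ∀ x, (⨆ m : ℕ, E.indicator (fun y => min (g y) (m : ℝ≥0∞)) x * φ x)
        = g x * φ x := by
      intro x
      by_cases hxE : x ∈ E
      · simp only [Set.indicator_of_mem hxE]
        rw [← ENNReal.iSup_mul, iSup_min_natCast]
      · simp only [Set.indicator_of_notMem hxE, zero_mul]
        rw [hφdef, Set.indicator_of_notMem hxE, mul_zero]
        simp
    have hmon : Monotone fun (m : ℕ) (x : EuclideanSpace ℝ (Fin n)) =>
        E.indicator (fun y => min (g y) (m : ℝ≥0∞)) x * φ x := by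
      intro i j hij x
      refine mul_le_mul_left ?_ _
      by_cases hxE : x ∈ E
      · rw [Set.indicator_of_mem hxE, Set.indicator_of_mem hxE]
        exact min_le_min le_rfl (by exact_mod_cast hij)
      · rw [Set.indicator_of_notMem hxE]; exact zero_le
    have h3 : ∫⁻ x, g x * φ x
        = ⨆ m : ℕ, ∫⁻ x, E.indicator (fun y => min (g y) (m : ℝ≥0∞)) x * φ x := by
      rw [← lintegral_iSup (f := fun m x => E.indicator (fun y => min (g y) (m : ℝ≥0∞)) x * φ x)
        (fun m => ((hgm.min measurable_const).indicator hEm).mul hφm) hmon]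
      exact lintegral_congr fun x => (hsupg x).symm
    have h5 : r' * ∫⁻ x, f0 x * φ x ≤ ENNReal.ofReal u0 := by
      have h1 : ∫⁻ x, f0 x * φ x = ∫⁻ x, g x * φ x := by
        rw [hFeq]; exact lintegral_congr fun x => (hgφ x).symm
      rw [h1, h3, ENNReal.mul_iSup]
      exact iSup_le hkey
    rw [ENNReal.le_div_iff_mul_le (Or.inl hr'0) (Or.inl hr't), mul_comm]
    exact h5
  -- rescale and contradict
  set U := ENNReal.ofReal u0 / r' with hU
  have hou0 : ENNReal.ofReal u0 ≠ 0 := (ENNReal.ofReal_pos.2 hu0pos).ne'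
  have hU0 : U ≠ 0 := by
    rw [hU]
    simp only [ne_eq, ENNReal.div_eq_zero_iff, not_or]
    exact ⟨hou0, hr't⟩
  have hUt : U ≠ ⊤ := by
    rw [hU]; exact (ENNReal.div_lt_top ENNReal.ofReal_ne_top hr'0).ne
  set φs : EuclideanSpace ℝ (Fin n) → ℝ≥0∞ := fun x => U⁻¹ * φ x with hφs
  have hφsm : Measurable φs := measurable_const.mul hφm
  have hφsfin : ∀ x, φs x < ⊤ := fun x =>
    ENNReal.mul_lt_top (ENNReal.inv_lt_top.2 (pos_iff_ne_zero.mpr hU0)) (hφfin x)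
  have hassoc' : Y.associate φs ≤ 1 := by
    refine iSup₂_le fun f0 hf0 => ?_
    have h1 : ∫⁻ x, f0 x * φs x = U⁻¹ * ∫⁻ x, f0 x * φ x := by
      rw [← lintegral_const_mul' U⁻¹ _ (by simp [hU0])]
      exact lintegral_congr fun x => by rw [hφs, mul_left_comm]
    have h2 : ∫⁻ x, f0 x * φ x ≤ U := by
      refine le_trans ?_ hassoc
      exact le_iSup₂ (f := fun g (_ : g ∈ {f | Y.ρ f ≤ 1}) => ∫⁻ x, g x * φ x) f0 hf0
    rw [h1]
    calc U⁻¹ * ∫⁻ x, f0 x * φ x ≤ U⁻¹ * U := mul_le_mul_right h2 _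
      _ = 1 := ENNReal.inv_mul_cancel hU0 hUt
  have hfinal := hb φs hφsm hφsfin hassoc'
  have h6 : ∫⁻ x, h x * φ x ≤ U * r := by
    have h7 : ∫⁻ x, h x * φs x = U⁻¹ * ∫⁻ x, h x * φ x := by
      rw [← lintegral_const_mul' U⁻¹ _ (by simp [hU0])]
      exact lintegral_congr fun x => by rw [hφs, mul_left_comm]
    calc ∫⁻ x, h x * φ x = U * (U⁻¹ * ∫⁻ x, h x * φ x) := by
          rw [← mul_assoc, ENNReal.mul_inv_cancel hU0 hUt, one_mul]
      _ ≤ U * r := mul_le_mul_right (h7 ▸ hfinal) U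
  have h8 : ENNReal.ofReal u0 < ∫⁻ x, h x * φ x :=
    lt_of_lt_of_le hlow (lintegral_mono fun x => mul_le_mul_left (hHNle x) _)
  have h9 : U * r < ENNReal.ofReal u0 := by
    calc U * r < U * r' := ENNReal.mul_lt_mul_right hU0 hUt hr1
      _ = ENNReal.ofReal u0 := by rw [hU, ENNReal.div_mul_cancel hr'0 hr't]
  exact absurd (h8.trans_le h6) (not_lt.2 h9.le)

/-- Löfström-type convolution estimate: if `Y(ℝⁿ)` is translation-invariant,
`w ∈ Y_loc`, `1/w ∈ Y'_loc`, `w* ∈ L¹_loc`, and `w*(y) w(x-y) w(x)⁻¹ ≥ 1` for all `x` and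
`y ∈ Ω`, then for every `κ ∈ L¹(ℝⁿ, w*)` supported in `Ω` and `f ∈ Y(ℝⁿ, w)`,
`‖κ ∗ f‖_{Y(ℝⁿ,w)} ≤ ‖κ‖_{L¹(ℝⁿ,w*)} ‖f‖_{Y(ℝⁿ,w)}`. -/
theorem convolution_estimate_weighted_TI {n : ℕ}
    (Y : BanachFunctionNorm (EuclideanSpace ℝ (Fin n)))
    (hTI : ∀ (y : EuclideanSpace ℝ (Fin n)) (f : EuclideanSpace ℝ (Fin n) → ℝ≥0∞),
        Y.ρ (fun x => f (x - y)) = Y.ρ f)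
    (Ω : Set (EuclideanSpace ℝ (Fin n))) (hΩm : MeasurableSet Ω) (hΩ : 0 < volume Ω)
    (w wstar : EuclideanSpace ℝ (Fin n) → ℝ≥0∞)
    (hwm : Measurable w) (hwstarm : Measurable wstar)
    (hw : ∀ x, 0 < w x ∧ w x < ⊤) (hwstar : ∀ x, 0 < wstar x ∧ wstar x < ⊤)
    (hwloc : ∀ E : Set (EuclideanSpace ℝ (Fin n)), MeasurableSet E → volume E < ⊤ →
        Y.ρ (E.indicator w) < ⊤)
    (hwinvloc : ∀ E : Set (EuclideanSpace ℝ (Fin n)), MeasurableSet E → volume E < ⊤ →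
        Y.associate (E.indicator fun x => (w x)⁻¹) < ⊤)
    (hwstarloc : ∀ E : Set (EuclideanSpace ℝ (Fin n)), MeasurableSet E → volume E < ⊤ →
        ∫⁻ x in E, wstar x < ⊤)
    (hkey : ∀ x : EuclideanSpace ℝ (Fin n), ∀ y ∈ Ω, 1 ≤ wstar y * w (x - y) * (w x)⁻¹)
    (κ f : EuclideanSpace ℝ (Fin n) → ℂ)
    (hκm : AEStronglyMeasurable κ volume) (hfm : AEStronglyMeasurable f volume)
    (hκsupp : ∀ x ∉ Ω, κ x = 0)
    (hκ : ∫⁻ y, (‖κ y‖₊ : ℝ≥0∞) * wstar y < ⊤)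
    (hf : Y.ρ (fun x => (‖f x‖₊ : ℝ≥0∞) * w x) < ⊤) :
    Y.ρ (fun x => (‖∫ y, κ y * f (x - y)‖₊ : ℝ≥0∞) * w x)
      ≤ (∫⁻ y, (‖κ y‖₊ : ℝ≥0∞) * wstar y) * Y.ρ (fun x => (‖f x‖₊ : ℝ≥0∞) * w x) := by
  -- measurable representatives
  set f' := hfm.mk f with hf'def
  have hf'm : Measurable f' := hfm.stronglyMeasurable_mk.measurable
  have hfae : f =ᵐ[volume] f' := hfm.ae_eq_mk
  set κ' := hκm.mk κ with hκ'def
  have hκ'm : Measurable κ' := hκm.stronglyMeasurable_mk.measurable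
  have hκae : κ =ᵐ[volume] κ' := hκm.ae_eq_mk
  set g : EuclideanSpace ℝ (Fin n) → ℝ≥0∞ := fun x => (‖f' x‖₊ : ℝ≥0∞) * w x with hg
  have hgm : Measurable g := hf'm.enorm.mul hwm
  set c : EuclideanSpace ℝ (Fin n) → ℝ≥0∞ := fun y => (‖κ' y‖₊ : ℝ≥0∞) * wstar y with hc
  have hcm : Measurable c := hκ'm.enorm.mul hwstarm
  have hcfin : ∀ y, c y ≠ ⊤ := fun y =>
    ENNReal.mul_ne_top ENNReal.coe_ne_top (hwstar y).2.ne
  have hIceq : ∫⁻ y, c y = ∫⁻ y, (‖κ y‖₊ : ℝ≥0∞) * wstar y := by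
    refine lintegral_congr_ae ?_
    filter_upwards [hκae] with y hy
    simp only [hc, hy]
  have hρgeq : Y.ρ g = Y.ρ (fun x => (‖f x‖₊ : ℝ≥0∞) * w x) := by
    refine Y.ρ_congr ?_
    filter_upwards [hfae] with x hx
    simp only [hg, hx]
  have hρgne : Y.ρ g ≠ ⊤ := by rw [hρgeq]; exact hf.ne
  set H : EuclideanSpace ℝ (Fin n) → ℝ≥0∞ := fun x => ∫⁻ y, c y * g (x - y) with hH
  have hHm : Measurable H := by
    have hum : Measurable (Function.uncurry fun x y => c y * g (x - y)) :=
      (hcm.comp measurable_snd).mul (hgm.comp (measurable_fst.sub measurable_snd))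
    exact hum.lintegral_prod_right
  have hnull : volume {y | ¬ f y = f' y} = 0 := hfae
  have hdom : ∀ x, (‖∫ y, κ y * f (x - y)‖₊ : ℝ≥0∞) * w x ≤ H x := by
    intro x
    have hsub : MeasurePreserving (fun y => x - y)
        (volume : Measure (EuclideanSpace ℝ (Fin n))) volume :=
      Measure.measurePreserving_sub_left volume x
    have hfsub : ∀ᵐ y ∂(volume : Measure (EuclideanSpace ℝ (Fin n))), f (x - y) = f' (x - y) := by
      rw [ae_iff]
      exact hsub.quasiMeasurePreserving.preimage_null hnull
    calc (‖∫ y, κ y * f (x - y)‖₊ : ℝ≥0∞) * w x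
        ≤ (∫⁻ y, (‖κ y * f (x - y)‖₊ : ℝ≥0∞)) * w x :=
          mul_le_mul_left (enorm_integral_le_lintegral_enorm _) _
      _ = ∫⁻ y, (‖κ y‖₊ : ℝ≥0∞) * (‖f (x - y)‖₊ : ℝ≥0∞) * w x := by
          rw [← lintegral_mul_const' (w x) _ (hw x).2.ne]
          refine lintegral_congr fun y => ?_
          rw [nnnorm_mul, ENNReal.coe_mul]
      _ ≤ ∫⁻ y, (‖κ y‖₊ : ℝ≥0∞) * wstar y * ((‖f (x - y)‖₊ : ℝ≥0∞) * w (x - y)) := by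
          refine lintegral_mono fun y => ?_
          by_cases hy : y ∈ Ω
          · have h1 : w x ≤ wstar y * w (x - y) := by
              calc w x = w x * 1 := (mul_one _).symm
                _ ≤ w x * (wstar y * w (x - y) * (w x)⁻¹) :=
                    mul_le_mul_right (hkey x y hy) _
                _ = wstar y * w (x - y) * (w x * (w x)⁻¹) := by ring
                _ = wstar y * w (x - y) := by
                    rw [ENNReal.mul_inv_cancel (hw x).1.ne' (hw x).2.ne, mul_one]
            calc (‖κ y‖₊ : ℝ≥0∞) * (‖f (x - y)‖₊ : ℝ≥0∞) * w x
                ≤ (‖κ y‖₊ : ℝ≥0∞) * (‖f (x - y)‖₊ : ℝ≥0∞) * (wstar y * w (x - y)) :=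
                  mul_le_mul_right h1 _
              _ = (‖κ y‖₊ : ℝ≥0∞) * wstar y * ((‖f (x - y)‖₊ : ℝ≥0∞) * w (x - y)) := by ring
          · simp [hκsupp y hy]
      _ = H x := by
          rw [hH]
          refine lintegral_congr_ae ?_
          filter_upwards [hfsub, hκae] with y hy1 hy2
          simp only [hc, hg, hy1, hy2]
  have step2 : Y.ρ (fun x => (‖∫ y, κ y * f (x - y)‖₊ : ℝ≥0∞) * w x) ≤ Y.ρ H :=
    Y.ρ_mono _ _ (ae_of_all _ hdom)
  have step3 : Y.ρ H ≤ (∫⁻ y, c y) * Y.ρ g := by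
    refine ρ_le_of_pairing Y H hHm _ ?_
    intro φ hφm hφfin hφassoc
    have hswap : ∫⁻ x, H x * φ x = ∫⁻ y, c y * ∫⁻ x, g (x - y) * φ x := by
      calc ∫⁻ x, H x * φ x = ∫⁻ x, ∫⁻ y, c y * g (x - y) * φ x := by
            refine lintegral_congr fun x => ?_
            rw [hH]
            exact (lintegral_mul_const' (φ x) _ (hφfin x).ne).symm
        _ = ∫⁻ y, ∫⁻ x, c y * g (x - y) * φ x := by
            refine lintegral_lintegral_swap ?_
            exact (((hcm.comp measurable_snd).mul
              (hgm.comp (measurable_fst.sub measurable_snd))).mul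
              (hφm.comp measurable_fst)).aemeasurable
        _ = ∫⁻ y, c y * ∫⁻ x, g (x - y) * φ x := by
            refine lintegral_congr fun y => ?_
            rw [← lintegral_const_mul' (c y) _ (hcfin y)]
            refine lintegral_congr fun x => ?_
            ring
    rw [hswap]
    have hb1 : ∀ y, ∫⁻ x, g (x - y) * φ x ≤ Y.ρ g := by
      intro y
      have htrans : Y.ρ (fun x => g (x - y)) = Y.ρ g := hTI y g
      have hp := Y.pair_le (f := fun x => g (x - y)) (by rw [htrans]; exact hρgne) hφassoc
      exact le_trans hp (le_of_eq htrans)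
    calc ∫⁻ y, c y * ∫⁻ x, g (x - y) * φ x ≤ ∫⁻ y, c y * Y.ρ g :=
          lintegral_mono fun y => mul_le_mul_right (hb1 y) _
      _ = (∫⁻ y, c y) * Y.ρ g := lintegral_mul_const _ hcm
  calc Y.ρ (fun x => (‖∫ y, κ y * f (x - y)‖₊ : ℝ≥0∞) * w x) ≤ Y.ρ H := step2
    _ ≤ (∫⁻ y, c y) * Y.ρ g := step3
    _ = (∫⁻ y, (‖κ y‖₊ : ℝ≥0∞) * wstar y) * Y.ρ (fun x => (‖f x‖₊ : ℝ≥0∞) * w x) := by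
        rw [hIceq, hρgeq]
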